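/- arXiv:2503.16255 — 3 statements merged into one kernel-verified Lean document; each statement's English description precedes it below -/
import Mathlib

section
/- Suppose g > 8 and d is an integer with g/3 + 3 ≤ d < ⌊(g+4)/2⌋. Then with k = ⌊d/2⌋, the inequality ρ(g,1,k) > ρ(g,2,d) holds, where ρ(g,r,d) = g−(r+1)(g−d+r). -/
/-- Brill--Noether number. -/
def rho (g r d : ℤ) : ℤ := g - (r + 1) * (g - d + r)

theorem stmt_8 (g d : ℤ) (hg : 8 < g)
    (hd1 : (g : ℚ) / 3 + 3 ≤ (d : ℚ)) (hd2 : d < (g + 4) / 2) :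
    rho g 1 (d / 2) > rho g 2 d := by
  have h1 : g + 9 ≤ 3 * d := by
    have : (g : ℚ) + 9 ≤ 3 * d := by linarith
    exact_mod_cast this
  unfold rho
  omega
end

section
/- In a 2×(g−k+1) grid filled with integers 1,…,g with strictly increasing rows and columns, where an integer may appear at most twice (once in each row), the grid-distance between the two appearances of any repeated integer is at most k. -/
lemma aux_gap_14 {n : ℕ} {f : Fin n → ℕ} (hf : StrictMono f) :
    ∀ d : ℕ, ∀ a b : Fin n, (a : ℕ) + d = b.val → f a + d ≤ f b := by
  intro d
  induction d with
  | zero =>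
    intro a b h
    have : a = b := Fin.ext (by omega)
    subst this
    omega
  | succ d ih =>
    intro a b h
    have hb : (a : ℕ) + d < n := by omega
    have h1 := ih a ⟨(a : ℕ) + d, hb⟩ rfl
    have h2 : f ⟨(a : ℕ) + d, hb⟩ < f b := hf (by simp [Fin.lt_def]; omega)
    omega

theorem stmt_14 (g k : ℕ) (hk : 1 ≤ k) (hkg : k ≤ g)
    (f : Fin 2 → Fin (g - k + 1) → ℕ)
    (hval : ∀ i j, f i j ∈ Finset.Icc 1 g)
    (hrow : ∀ i, StrictMono (f i))
    (hcol : ∀ j, f 0 j < f 1 j)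
    (j₁ j₂ : Fin (g - k + 1)) (hrep : f 0 j₁ = f 1 j₂) :
    |(j₁ : ℤ) - (j₂ : ℤ)| + 1 ≤ (k : ℤ) := by
  -- j₂ < j₁ (or equal impossible unless strict)
  have hj : (j₂ : ℕ) < (j₁ : ℕ) := by
    by_contra h
    push_neg at h
    have h1 : f 0 j₁ ≤ f 0 j₂ := (hrow 0).le_iff_le.mpr (by exact Fin.le_def.mpr h)
    have h2 := hcol j₂
    omega
  -- f 0 j₁ ≥ f 0 ⟨0⟩ + j₁
  have h0 : (0 : ℕ) < g - k + 1 := by omega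
  have hlo := aux_gap_14 (hrow 0) (j₁ : ℕ) ⟨0, h0⟩ j₁ (by simp)
  have hlast : g - k < g - k + 1 := by omega
  have hhi := aux_gap_14 (hrow 1) (g - k - (j₂ : ℕ)) j₂ ⟨g - k, hlast⟩ (by simp; omega)
  have hv1 := hval 0 ⟨0, h0⟩
  have hv2 := hval 1 ⟨g - k, hlast⟩
  simp only [Finset.mem_Icc] at hv1 hv2
  have hlt1 := j₁.isLt
  have hlt2 := j₂.isLt
  have hj1 : (j₁ : ℕ) ≤ g - k := by omega
  have key : (j₁ : ℕ) - (j₂ : ℕ) + 1 ≤ k := by omega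
  rw [abs_of_nonneg (by push_cast; omega)]
  push_cast
  omega
end

section
/- Let D be a smooth curve of genus 2 with hyperelliptic involution ι, and let R₁, R₃, R₅, R₇, P, Q be points on D such that the divisor classes satisfy R₃−R₁ ∼ R₅−R₃ ∼ R₇−R₅ ∼ 2P−2Q (linear equivalence), and K_D ∼ R₁+R₇ ∼ R₃+R₅ where K_D is the canonical class. Then R₁ = R₃ = R₅ = R₇ is a Weierstrass point of D, and 2P ∼ 2Q, so P and Q are Weierstrass points. -/
/-- Abstract divisor-class data of a smooth genus-2 curve: `Point` is the set of points,
`Cl` its divisor class group, `cl R` the class of the degree-1 divisor `R`, `K` the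
canonical class, and `ι` the hyperelliptic involution.  The axiom `canonical_pair`
says `R + R' ∼ K_D` iff `R' = ι R`; the axiom `unique_pair` says that a degree-2 class
with two distinct effective representatives is the canonical class. -/
theorem stmt_15 {Point Cl : Type*} [AddCommGroup Cl]
    (cl : Point → Cl) (K : Cl) (ι : Point → Point)
    (canonical_pair : ∀ R R' : Point, cl R + cl R' = K ↔ R' = ι R)
    (unique_pair : ∀ A B A' B' : Point, cl A + cl B = cl A' + cl B' →
      ({A, B} : Multiset Point) = {A', B'} ∨ cl A + cl B = K)
    (R₁ R₃ R₅ R₇ P Q : Point) (hPQ : P ≠ Q)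
    (h₁₃ : cl R₃ - cl R₁ = cl P + cl P - (cl Q + cl Q))
    (h₃₅ : cl R₅ - cl R₃ = cl P + cl P - (cl Q + cl Q))
    (h₅₇ : cl R₇ - cl R₅ = cl P + cl P - (cl Q + cl Q))
    (hK₁₇ : cl R₁ + cl R₇ = K)
    (hK₃₅ : cl R₃ + cl R₅ = K) :
    R₁ = R₃ ∧ R₃ = R₅ ∧ R₅ = R₇ ∧ ι R₁ = R₁ ∧
      cl P + cl P = cl Q + cl Q ∧ ι P = P ∧ ι Q = Q := by
  have hR7 : R₇ = ι R₁ := (canonical_pair R₁ R₇).mp hK₁₇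
  have hR5 : R₅ = ι R₃ := (canonical_pair R₃ R₅).mp hK₃₅
  have hmid : cl R₃ + cl R₃ = cl R₁ + cl R₅ := by
    have := sub_eq_sub_iff_add_eq_add.mp (h₁₃.trans h₃₅.symm)
    rw [add_comm (cl R₅)] at this
    exact this
  -- main case split
  have main : R₁ = R₃ ∧ R₃ = R₅ := by
    rcases unique_pair R₃ R₃ R₁ R₅ hmid with h | h
    · have h1 : R₁ = R₃ := by
        have : R₁ ∈ ({R₃, R₃} : Multiset Point) := by rw [h]; simp
        simpa using this
      have h5 : R₅ = R₃ := by
        have : R₅ ∈ ({R₃, R₃} : Multiset Point) := by rw [h]; simp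
        simpa using this
      exact ⟨h1, h5.symm⟩
    · have hι3 : ι R₃ = R₃ := ((canonical_pair R₃ R₃).mp h).symm
      have h5 : R₃ = R₅ := by rw [hR5, hι3]
      have hcl13 : cl R₁ = cl R₃ := by
        have : cl R₅ - cl R₃ = 0 := by rw [← h5]; abel
        have h0 : cl P + cl P - (cl Q + cl Q) = 0 := h₃₅ ▸ this
        exact (sub_eq_zero.mp (h₁₃.trans h0)).symm
      have hK13 : cl R₃ + cl R₁ = K := by rw [hcl13]; exact h
      have h1 : R₁ = R₃ := by
        have := (canonical_pair R₃ R₁).mp hK13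
        rw [this, hι3]
      exact ⟨h1, h5⟩
  obtain ⟨h13, h35⟩ := main
  have hd : cl P + cl P = cl Q + cl Q := by
    have : cl R₃ - cl R₁ = 0 := by rw [h13]; abel
    exact sub_eq_zero.mp (this.symm.trans h₁₃).symm
  have h57 : R₅ = R₇ := by
    rw [hR7, hR5, h13]
  have hι1 : ι R₁ = R₁ := by
    rw [h13, ← hR5, ← h35]
  have hPw : ι P = P ∧ ι Q = Q := by
    rcases unique_pair P P Q Q hd with h | h
    · exfalso; apply hPQ
      have : P ∈ ({Q, Q} : Multiset Point) := by rw [← h]; simp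
      simpa using this
    · constructor
      · exact ((canonical_pair P P).mp h).symm
      · have : cl Q + cl Q = K := by rw [← hd]; exact h
        exact ((canonical_pair Q Q).mp this).symm
  exact ⟨h13, h35, h57, hι1, hd, hPw.1, hPw.2⟩
end
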